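/- The mutilated chessboard cannot be tiled by dominoes: there is no partition of the 62 squares of an 8×8 chessboard with two opposite corners removed into 31 pairs of horizontally or vertically adjacent squares. -/
import Mathlib


/-- Two cells are adjacent if they differ by 1 in exactly one coordinate. -/
def ChessAdj (a b : ℕ × ℕ) : Prop :=
  (a.1 = b.1 ∧ (a.2 + 1 = b.2 ∨ b.2 + 1 = a.2)) ∨
  (a.2 = b.2 ∧ (a.1 + 1 = b.1 ∨ b.1 + 1 = a.1))

/-- The 8×8 board with the opposite corners (0,0) and (7,7) removed. -/
def mutilatedBoard : Finset (ℕ × ℕ) :=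
  (((Finset.range 8) ×ˢ (Finset.range 8)).erase (0, 0)).erase (7, 7)

lemma domino_one_even {a b : ℕ × ℕ} (h : ChessAdj a b) :
    (({a, b} : Finset (ℕ × ℕ)).filter (fun p => (p.1 + p.2) % 2 = 0)).card = 1 := by
  have hne : a ≠ b := by
    rcases h with ⟨_, h2⟩ | ⟨_, h2⟩ <;>
      rintro rfl <;> omega
  have hpar : (a.1 + a.2) % 2 = 0 ↔ ¬ (b.1 + b.2) % 2 = 0 := by
    rcases h with ⟨h1, h2⟩ | ⟨h1, h2⟩ <;> omega
  rw [Finset.filter_insert]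
  by_cases hA : (a.1 + a.2) % 2 = 0
  · rw [if_pos hA, Finset.filter_singleton, if_neg (hpar.mp hA)]
    simp
  · rw [if_neg hA, Finset.filter_singleton, if_pos (by tauto)]
    simp

lemma board_even_count :
    (mutilatedBoard.filter (fun p => (p.1 + p.2) % 2 = 0)).card = 30 := by
  decide

theorem mutilated_chessboard_no_tiling :
    ¬ ∃ D : Finset (Finset (ℕ × ℕ)),
      D.card = 31 ∧
      (∀ d ∈ D, ∃ a b : ℕ × ℕ, ChessAdj a b ∧ d = {a, b}) ∧
      (∀ d ∈ D, ∀ e ∈ D, d ≠ e → Disjoint d e) ∧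
      D.sup id = mutilatedBoard := by
  rintro ⟨D, hcard, hdom, hdisj, hsup⟩
  have hb : D.biUnion id = mutilatedBoard := by
    rw [← Finset.sup_eq_biUnion]; exact hsup
  have h1 : (mutilatedBoard.filter (fun p => (p.1 + p.2) % 2 = 0)).card
      = (D.biUnion (fun d => d.filter (fun p => (p.1 + p.2) % 2 = 0))).card := by
    rw [← hb, Finset.filter_biUnion]; rfl
  have h2 : (D.biUnion (fun d => d.filter (fun p => (p.1 + p.2) % 2 = 0))).card
      = ∑ d ∈ D, (d.filter (fun p => (p.1 + p.2) % 2 = 0)).card := by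
    apply Finset.card_biUnion
    intro x hx y hy hxy
    exact Finset.disjoint_filter_filter (hdisj x hx y hy hxy)
  have h3 : ∑ d ∈ D, (d.filter (fun p => (p.1 + p.2) % 2 = 0)).card = 31 := by
    rw [Finset.sum_congr rfl (fun d hd => ?_), Finset.sum_const, hcard, smul_eq_mul, mul_one]
    obtain ⟨a, b, hab, rfl⟩ := hdom d hd
    exact domino_one_even hab
  rw [board_even_count, h2, h3] at h1
  exact absurd h1 (by norm_num)
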